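/- Let g be holomorphic on the unit disc. For every m ∈ ℕ and every holomorphic f on the disc with f(0) = 0, (S_g − T_g)^m f = Σ_{j=0}^m (−1)^{m−j} (m!/j!) S_g^j T_g^{m−j} f. -/

import Mathlib

open MeasureTheory Metric

/-- The analytic paraproduct `T_g f (z) = ∫₀^z f(ζ) g'(ζ) dζ`, realized by
integrating along the segment from `0` to `z`. -/
noncomputable def Tg (g f : ℂ → ℂ) : ℂ → ℂ :=
  fun z => z * ∫ t in (0:ℝ)..1, f ((t : ℂ) * z) * deriv g ((t : ℂ) * z)

/-- The analytic paraproduct `S_g f (z) = ∫₀^z f'(ζ) g(ζ) dζ`, realized by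
integrating along the segment from `0` to `z`. -/
noncomputable def Sg (g f : ℂ → ℂ) : ℂ → ℂ :=
  fun z => z * ∫ t in (0:ℝ)..1, deriv f ((t : ℂ) * z) * g ((t : ℂ) * z)

/-- The multiplication operator `M_g f = g f`. -/
def Mg (g f : ℂ → ℂ) : ℂ → ℂ := fun z => g z * f z


section Aux
open Set

lemma seg_mem_ball {z : ℂ} (hz : z ∈ ball (0:ℂ) 1) {t : ℝ} (h0 : 0 ≤ t) (h1 : t ≤ 1) :
    (t:ℂ) * z ∈ ball (0:ℂ) 1 := by
  rw [mem_ball_zero_iff] at hz ⊢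
  calc ‖(t:ℂ) * z‖ = t * ‖z‖ := by
        rw [norm_mul, Complex.norm_real, Real.norm_of_nonneg h0]
    _ ≤ 1 * ‖z‖ := by nlinarith [norm_nonneg z]
    _ < 1 := by simpa using hz

lemma dOn_deriv {u : ℂ → ℂ} (hu : DifferentiableOn ℂ u (ball (0:ℂ) 1)) :
    DifferentiableOn ℂ (deriv u) (ball (0:ℂ) 1) :=
  ((hu.analyticOnNhd isOpen_ball).deriv).differentiableOn

lemma cOn_deriv {u : ℂ → ℂ} (hu : DifferentiableOn ℂ u (ball (0:ℂ) 1)) :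
    ContinuousOn (deriv u) (ball (0:ℂ) 1) :=
  (dOn_deriv hu).continuousOn

/-- continuity of `t ↦ q (t * z)` on `[0,1]` for `q` continuous on the ball. -/
lemma contOn_seg {q : ℂ → ℂ} (hq : ContinuousOn q (ball (0:ℂ) 1)) {z : ℂ}
    (hz : z ∈ ball (0:ℂ) 1) :
    ContinuousOn (fun t : ℝ => q ((t:ℂ) * z)) (Icc (0:ℝ) 1) := by
  apply hq.comp (Continuous.continuousOn (by continuity))
  intro t ht
  exact seg_mem_ball hz ht.1 ht.2

/-- The fundamental primitive lemma. -/
lemma primitive_hasDerivAt {h : ℂ → ℂ} (hh : DifferentiableOn ℂ h (ball (0:ℂ) 1))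
    {z : ℂ} (hz : z ∈ ball (0:ℂ) 1) :
    HasDerivAt (fun w : ℂ => w * ∫ t in (0:ℝ)..1, h ((t:ℂ) * w)) (h z) z := by
  have hz1 : ‖z‖ < 1 := mem_ball_zero_iff.mp hz
  set ε : ℝ := (1 - ‖z‖) / 2 with hε
  have εpos : 0 < ε := by rw [hε]; linarith
  set ρ : ℝ := ‖z‖ + ε with hρ
  have hρ1 : ρ < 1 := by rw [hρ, hε]; linarith
  have hball : ∀ {x : ℂ}, x ∈ ball z ε → ‖x‖ < ρ := by
    intro x hx
    have h1 : ‖x - z‖ < ε := mem_ball_iff_norm.mp hx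
    calc ‖x‖ = ‖z + (x - z)‖ := by ring_nf
      _ ≤ ‖z‖ + ‖x - z‖ := norm_add_le _ _
      _ < ρ := by rw [hρ]; linarith
  have hsub : ∀ {x : ℂ}, x ∈ ball z ε → ∀ {t : ℝ}, t ∈ Set.uIoc (0:ℝ) 1 → (t:ℂ) * x ∈ ball (0:ℂ) 1 := by
    intro x hx t ht
    rw [Set.uIoc_of_le (zero_le_one)] at ht
    rw [mem_ball_zero_iff]
    calc ‖(t:ℂ) * x‖ = t * ‖x‖ := by
          rw [norm_mul, Complex.norm_real, Real.norm_of_nonneg ht.1.le]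
      _ ≤ 1 * ‖x‖ := by nlinarith [norm_nonneg x, ht.2, ht.1.le]
      _ < 1 := by rw [one_mul]; exact lt_trans (hball hx) hρ1
  -- bound for deriv h on closed ball of radius ρ
  have hcb : closedBall (0:ℂ) ρ ⊆ ball (0:ℂ) 1 := by
    intro x hx; rw [mem_ball_zero_iff]; exact lt_of_le_of_lt (mem_closedBall_zero_iff.mp hx) hρ1
  obtain ⟨C, hC⟩ := (isCompact_closedBall (0:ℂ) ρ).exists_bound_of_continuousOn
    ((cOn_deriv hh).mono hcb)
  have key : HasDerivAt (fun w : ℂ => ∫ t in (0:ℝ)..1, h ((t:ℂ) * w))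
      (∫ t in (0:ℝ)..1, deriv h ((t:ℂ) * z) * (t:ℂ)) z := by
    have hzε : z ∈ ball z ε := mem_ball_self εpos
    refine (intervalIntegral.hasDerivAt_integral_of_dominated_loc_of_deriv_le
      (F := fun w t => h ((t:ℂ) * w)) (F' := fun w t => deriv h ((t:ℂ) * w) * (t:ℂ))
      (bound := fun _ => C) (ball_mem_nhds z εpos) ?_ ?_ ?_ ?_ ?_ ?_).2
    · filter_upwards [isOpen_ball.mem_nhds hzε] with x hx
      apply ContinuousOn.aestronglyMeasurable _ measurableSet_uIoc
      intro t ht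
      have ht' : t ∈ Icc (0:ℝ) 1 := by
        rw [Set.uIoc_of_le zero_le_one] at ht; exact ⟨ht.1.le, ht.2⟩
      exact (contOn_seg hh.continuousOn (by
        rw [mem_ball_zero_iff]; exact lt_trans (hball hx) hρ1)).continuousWithinAt ht' |>.mono
        (by rw [Set.uIoc_of_le zero_le_one]; exact Ioc_subset_Icc_self)
    · apply ContinuousOn.intervalIntegrable
      rw [Set.uIcc_of_le zero_le_one]
      exact contOn_seg hh.continuousOn hz
    · apply ContinuousOn.aestronglyMeasurable _ measurableSet_uIoc
      have : ContinuousOn (fun t : ℝ => deriv h ((t:ℂ) * z) * (t:ℂ)) (Icc (0:ℝ) 1) :=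
        (contOn_seg (cOn_deriv hh) hz).mul (Continuous.continuousOn (by continuity))
      intro t ht
      have ht' : t ∈ Icc (0:ℝ) 1 := by
        rw [Set.uIoc_of_le zero_le_one] at ht; exact ⟨ht.1.le, ht.2⟩
      exact (this.continuousWithinAt ht').mono
        (by rw [Set.uIoc_of_le zero_le_one]; exact Ioc_subset_Icc_self)
    · filter_upwards with t
      intro ht x hx
      have ht' : 0 < t ∧ t ≤ 1 := by rwa [Set.uIoc_of_le zero_le_one] at ht
      have hmem : (t:ℂ) * x ∈ closedBall (0:ℂ) ρ := by
        rw [mem_closedBall_zero_iff]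
        calc ‖(t:ℂ) * x‖ = t * ‖x‖ := by
              rw [norm_mul, Complex.norm_real, Real.norm_of_nonneg ht'.1.le]
          _ ≤ 1 * ‖x‖ := by nlinarith [norm_nonneg x, ht'.2, ht'.1.le]
          _ ≤ ρ := by rw [one_mul]; exact (hball hx).le
      calc ‖deriv h ((t:ℂ) * x) * (t:ℂ)‖ = ‖deriv h ((t:ℂ) * x)‖ * |t| := by
            rw [norm_mul, Complex.norm_real, Real.norm_eq_abs]
        _ ≤ C * 1 := by
            apply mul_le_mul (hC _ hmem) (by rw [abs_of_nonneg ht'.1.le]; exact ht'.2)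
              (abs_nonneg t) (le_trans (norm_nonneg _) (hC _ hmem))
        _ = C := mul_one C
    · exact intervalIntegrable_const
    · filter_upwards with t
      intro ht x hx
      have hdh : HasDerivAt h (deriv h ((t:ℂ) * x)) ((t:ℂ) * x) :=
        (hh.differentiableAt (isOpen_ball.mem_nhds (hsub hx ht))).hasDerivAt
      have hlin : HasDerivAt (fun y : ℂ => (t:ℂ) * y) ((t:ℂ)) x := by
        simpa using (hasDerivAt_id x).const_mul (t:ℂ)
      exact hdh.comp x hlin
  have prod := (hasDerivAt_id z).mul key
  -- now identify 1 * ∫ + z * ∫ ... with h z via FTC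
  have FTC : (∫ t in (0:ℝ)..1, (h ((t:ℂ) * z) + (t:ℂ) * (deriv h ((t:ℂ) * z) * z))) = h z := by
    have : ∀ t ∈ Set.uIcc (0:ℝ) 1,
        HasDerivAt (fun s : ℝ => (s:ℂ) * h ((s:ℂ) * z))
          (h ((t:ℂ) * z) + (t:ℂ) * (deriv h ((t:ℂ) * z) * z)) t := by
      intro t ht
      rw [Set.uIcc_of_le zero_le_one] at ht
      have h1 : HasDerivAt (fun s : ℝ => ((s:ℝ):ℂ)) 1 t := by
        simpa using (hasDerivAt_id t).ofReal_comp
      have hdh : HasDerivAt h (deriv h ((t:ℂ) * z)) ((t:ℂ) * z) :=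
        (hh.differentiableAt (isOpen_ball.mem_nhds (seg_mem_ball hz ht.1 ht.2))).hasDerivAt
      have hinner : HasDerivAt (fun w : ℂ => h (w * z)) (deriv h ((t:ℂ) * z) * z) (t:ℂ) := by
        have hlin : HasDerivAt (fun y : ℂ => y * z) z (t:ℂ) := by
          simpa using (hasDerivAt_id ((t:ℂ))).mul_const z
        exact hdh.comp (t:ℂ) hlin
      have h2 : HasDerivAt (fun s : ℝ => h ((s:ℂ) * z)) (deriv h ((t:ℂ) * z) * z) t :=
        hinner.comp_ofReal
      have h12 := h1.mul h2
      simp only [one_mul] at h12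
      exact h12
    have hint : IntervalIntegrable
        (fun t : ℝ => h ((t:ℂ) * z) + (t:ℂ) * (deriv h ((t:ℂ) * z) * z)) volume 0 1 := by
      apply ContinuousOn.intervalIntegrable
      rw [Set.uIcc_of_le zero_le_one]
      exact (contOn_seg hh.continuousOn hz).add
        ((Continuous.continuousOn (by continuity)).mul ((contOn_seg (cOn_deriv hh) hz).mul
          continuousOn_const))
    have := intervalIntegral.integral_eq_sub_of_hasDerivAt this hint
    simpa using this
  have split : (∫ t in (0:ℝ)..1, (h ((t:ℂ) * z) + (t:ℂ) * (deriv h ((t:ℂ) * z) * z)))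
      = (∫ t in (0:ℝ)..1, h ((t:ℂ) * z)) + z * ∫ t in (0:ℝ)..1, deriv h ((t:ℂ) * z) * (t:ℂ) := by
    rw [intervalIntegral.integral_add]
    · congr 1
      rw [← intervalIntegral.integral_const_mul]
      apply intervalIntegral.integral_congr
      intro t ht; ring
    · apply ContinuousOn.intervalIntegrable
      rw [Set.uIcc_of_le zero_le_one]
      exact contOn_seg hh.continuousOn hz
    · apply ContinuousOn.intervalIntegrable
      rw [Set.uIcc_of_le zero_le_one]
      exact (Continuous.continuousOn (by continuity)).mul
        ((contOn_seg (cOn_deriv hh) hz).mul continuousOn_const)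
  have : h z = 1 * (∫ t in (0:ℝ)..1, h ((t:ℂ) * z))
      + z * ∫ t in (0:ℝ)..1, deriv h ((t:ℂ) * z) * (t:ℂ) := by
    rw [one_mul, ← split, FTC]
  rw [this]
  exact prod

def Good (h : ℂ → ℂ) : Prop := DifferentiableOn ℂ h (ball (0:ℂ) 1) ∧ h 0 = 0

variable {g : ℂ → ℂ}

lemma hasDerivAt_T (hg : DifferentiableOn ℂ g (ball (0:ℂ) 1)) {h : ℂ → ℂ} (hh : DifferentiableOn ℂ h (ball (0:ℂ) 1))
    {z : ℂ} (hz : z ∈ ball (0:ℂ) 1) :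
    HasDerivAt (Tg g h) (h z * deriv g z) z :=
  primitive_hasDerivAt (h := fun w => h w * deriv g w) (hh.mul (dOn_deriv hg)) hz

lemma hasDerivAt_S (hg : DifferentiableOn ℂ g (ball (0:ℂ) 1)) {h : ℂ → ℂ} (hh : DifferentiableOn ℂ h (ball (0:ℂ) 1))
    {z : ℂ} (hz : z ∈ ball (0:ℂ) 1) :
    HasDerivAt (Sg g h) (deriv h z * g z) z :=
  primitive_hasDerivAt (h := fun w => deriv h w * g w) ((dOn_deriv hh).mul hg) hz

lemma good_T (hg : DifferentiableOn ℂ g (ball (0:ℂ) 1)) {h : ℂ → ℂ} (hh : DifferentiableOn ℂ h (ball (0:ℂ) 1)) : Good (Tg g h) :=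
  ⟨fun z hz => ((hasDerivAt_T hg hh hz).differentiableAt).differentiableWithinAt,
   by simp [Tg]⟩

lemma good_S (hg : DifferentiableOn ℂ g (ball (0:ℂ) 1)) {h : ℂ → ℂ} (hh : DifferentiableOn ℂ h (ball (0:ℂ) 1)) : Good (Sg g h) :=
  ⟨fun z hz => ((hasDerivAt_S hg hh hz).differentiableAt).differentiableWithinAt,
   by simp [Sg]⟩

/-- uniqueness: equal deriv on ball + equal at 0 gives EqOn. -/
lemma eqOn_of_hasDerivAt {F G d : ℂ → ℂ}
    (hF : ∀ z ∈ ball (0:ℂ) 1, HasDerivAt F (d z) z)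
    (hG : ∀ z ∈ ball (0:ℂ) 1, HasDerivAt G (d z) z)
    (h0 : F 0 = G 0) : Set.EqOn F G (ball (0:ℂ) 1) := by
  apply (convex_ball (0:ℂ) 1).eqOn_of_fderivWithin_eq
    (fun z hz => ((hF z hz).differentiableAt).differentiableWithinAt)
    (fun z hz => ((hG z hz).differentiableAt).differentiableWithinAt)
    (isOpen_ball.uniqueDiffOn)
    (fun z hz => ?_) (mem_ball_self one_pos) h0
  rw [fderivWithin_of_isOpen isOpen_ball hz, fderivWithin_of_isOpen isOpen_ball hz,
    (hF z hz).hasFDerivAt.fderiv, (hG z hz).hasFDerivAt.fderiv]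

lemma T_congr {h₁ h₂ : ℂ → ℂ} (h12 : Set.EqOn h₁ h₂ (ball (0:ℂ) 1)) :
    Set.EqOn (Tg g h₁) (Tg g h₂) (ball (0:ℂ) 1) := by
  intro z hz
  unfold Tg
  congr 1
  apply intervalIntegral.integral_congr
  intro t ht
  rw [Set.uIcc_of_le zero_le_one] at ht
  show h₁ ((t:ℂ)*z) * deriv g ((t:ℂ)*z) = h₂ ((t:ℂ)*z) * deriv g ((t:ℂ)*z)
  rw [h12 (seg_mem_ball hz ht.1 ht.2)]

lemma S_congr {h₁ h₂ : ℂ → ℂ} (h12 : Set.EqOn h₁ h₂ (ball (0:ℂ) 1)) :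
    Set.EqOn (Sg g h₁) (Sg g h₂) (ball (0:ℂ) 1) := by
  intro z hz
  unfold Sg
  congr 1
  apply intervalIntegral.integral_congr
  intro t ht
  rw [Set.uIcc_of_le zero_le_one] at ht
  have : deriv h₁ ((t:ℂ) * z) = deriv h₂ ((t:ℂ) * z) :=
    Filter.EventuallyEq.deriv_eq
      (h12.eventuallyEq_of_mem (isOpen_ball.mem_nhds (seg_mem_ball hz ht.1 ht.2)))
  show deriv h₁ ((t:ℂ)*z) * g ((t:ℂ)*z) = deriv h₂ ((t:ℂ)*z) * g ((t:ℂ)*z)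
  rw [this]

lemma T_sub_smul (hg : DifferentiableOn ℂ g (ball (0:ℂ) 1)) {u v : ℂ → ℂ} (hu : ContinuousOn u (ball (0:ℂ) 1))
    (hv : ContinuousOn v (ball (0:ℂ) 1)) (c : ℂ) :
    Set.EqOn (Tg g (fun w => u w - c * v w))
      (fun z => Tg g u z - c * Tg g v z) (ball (0:ℂ) 1) := by
  intro z hz
  unfold Tg
  simp only
  have hg' := contOn_seg (cOn_deriv hg) hz
  have h1 : IntervalIntegrable (fun t : ℝ => u ((t:ℂ)*z) * deriv g ((t:ℂ)*z)) volume 0 1 := by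
    apply ContinuousOn.intervalIntegrable
    rw [Set.uIcc_of_le zero_le_one]
    exact (contOn_seg hu hz).mul hg'
  have h2 : IntervalIntegrable (fun t : ℝ => c * (v ((t:ℂ)*z) * deriv g ((t:ℂ)*z))) volume 0 1 := by
    apply ContinuousOn.intervalIntegrable
    rw [Set.uIcc_of_le zero_le_one]
    exact continuousOn_const.mul ((contOn_seg hv hz).mul hg')
  have : (∫ t in (0:ℝ)..1, (u ((t:ℂ)*z) - c * v ((t:ℂ)*z)) * deriv g ((t:ℂ)*z))
      = ∫ t in (0:ℝ)..1, (u ((t:ℂ)*z) * deriv g ((t:ℂ)*z)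
          - c * (v ((t:ℂ)*z) * deriv g ((t:ℂ)*z))) := by
    apply intervalIntegral.integral_congr; intro t ht; ring
  rw [this, intervalIntegral.integral_sub h1 h2, intervalIntegral.integral_const_mul]
  ring

lemma S_sub_smul (hg : DifferentiableOn ℂ g (ball (0:ℂ) 1)) {u v : ℂ → ℂ} (hu : DifferentiableOn ℂ u (ball (0:ℂ) 1))
    (hv : DifferentiableOn ℂ v (ball (0:ℂ) 1)) (c : ℂ) :
    Set.EqOn (Sg g (fun w => u w - c * v w))
      (fun z => Sg g u z - c * Sg g v z) (ball (0:ℂ) 1) := by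
  intro z hz
  unfold Sg
  simp only
  have hgc := hg.continuousOn
  have hd : ∀ {w : ℂ}, w ∈ ball (0:ℂ) 1 →
      deriv (fun w => u w - c * v w) w = deriv u w - c * deriv v w := by
    intro w hw
    have hu' : HasDerivAt u (deriv u w) w :=
      (hu.differentiableAt (isOpen_ball.mem_nhds hw)).hasDerivAt
    have hv' : HasDerivAt v (deriv v w) w :=
      (hv.differentiableAt (isOpen_ball.mem_nhds hw)).hasDerivAt
    exact (hu'.sub (hv'.const_mul c)).deriv
  have h1 : IntervalIntegrable (fun t : ℝ => deriv u ((t:ℂ)*z) * g ((t:ℂ)*z)) volume 0 1 := by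
    apply ContinuousOn.intervalIntegrable
    rw [Set.uIcc_of_le zero_le_one]
    exact (contOn_seg (cOn_deriv hu) hz).mul (contOn_seg hgc hz)
  have h2 : IntervalIntegrable (fun t : ℝ => c * (deriv v ((t:ℂ)*z) * g ((t:ℂ)*z))) volume 0 1 := by
    apply ContinuousOn.intervalIntegrable
    rw [Set.uIcc_of_le zero_le_one]
    exact continuousOn_const.mul ((contOn_seg (cOn_deriv hv) hz).mul (contOn_seg hgc hz))
  have : (∫ t in (0:ℝ)..1, deriv (fun w => u w - c * v w) ((t:ℂ)*z) * g ((t:ℂ)*z))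
      = ∫ t in (0:ℝ)..1, (deriv u ((t:ℂ)*z) * g ((t:ℂ)*z)
          - c * (deriv v ((t:ℂ)*z) * g ((t:ℂ)*z))) := by
    apply intervalIntegral.integral_congr
    intro t ht
    rw [Set.uIcc_of_le zero_le_one] at ht
    show deriv (fun w => u w - c * v w) ((t:ℂ)*z) * g ((t:ℂ)*z) = _
    rw [hd (seg_mem_ball hz ht.1 ht.2)]
    ring
  rw [this, intervalIntegral.integral_sub h1 h2, intervalIntegral.integral_const_mul]
  ring

lemma ST_add (hg : DifferentiableOn ℂ g (ball (0:ℂ) 1)) {h : ℂ → ℂ} (hh : Good h) :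
    Set.EqOn (fun z => Sg g h z + Tg g h z) (fun z => g z * h z) (ball (0:ℂ) 1) := by
  apply eqOn_of_hasDerivAt (d := fun z => deriv h z * g z + h z * deriv g z)
  · intro z hz
    exact (hasDerivAt_S hg hh.1 hz).add (hasDerivAt_T hg hh.1 hz)
  · intro z hz
    have h1 : HasDerivAt g (deriv g z) z :=
      (hg.differentiableAt (isOpen_ball.mem_nhds hz)).hasDerivAt
    have h2 : HasDerivAt h (deriv h z) z :=
      (hh.1.differentiableAt (isOpen_ball.mem_nhds hz)).hasDerivAt
    have := h1.mul h2
    refine this.congr_deriv ?_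
    ring
  · simp [Sg, Tg, hh.2]

lemma comm_TS (hg : DifferentiableOn ℂ g (ball (0:ℂ) 1)) {h : ℂ → ℂ} (hh : Good h) :
    Set.EqOn (Tg g (Sg g h))
      (fun z => Sg g (Tg g h) z - Tg g (Tg g h) z) (ball (0:ℂ) 1) := by
  apply eqOn_of_hasDerivAt (d := fun z => Sg g h z * deriv g z)
  · intro z hz
    exact hasDerivAt_T hg (good_S hg hh.1).1 hz
  · intro z hz
    have h1 := (hasDerivAt_S hg (good_T hg hh.1).1 hz).sub (hasDerivAt_T hg (good_T hg hh.1).1 hz)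
    have h2 : deriv (Tg g h) z = h z * deriv g z := (hasDerivAt_T hg hh.1 hz).deriv
    rw [h2] at h1
    have h3 : Sg g h z + Tg g h z = g z * h z := ST_add hg hh hz
    refine h1.congr_deriv ?_
    linear_combination -(deriv g z) * h3
  · simp [Sg, Tg]

lemma good_comb {u v : ℂ → ℂ} (hu : Good u) (hv : Good v) (c : ℂ) :
    Good (fun z => u z - c * v z) :=
  ⟨hu.1.sub (hv.1.const_mul c), by simp [hu.2, hv.2]⟩

lemma good_iter_T (hg : DifferentiableOn ℂ g (ball (0:ℂ) 1)) {h : ℂ → ℂ} (hh : Good h) (k : ℕ) :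
    Good ((Tg g)^[k] h) := by
  induction k with
  | zero => exact hh
  | succ k ih => rw [Function.iterate_succ_apply']; exact good_T hg ih.1

lemma good_iter_S (hg : DifferentiableOn ℂ g (ball (0:ℂ) 1)) {h : ℂ → ℂ} (hh : Good h) (k : ℕ) :
    Good ((Sg g)^[k] h) := by
  induction k with
  | zero => exact hh
  | succ k ih => rw [Function.iterate_succ_apply']; exact good_S hg ih.1

/-- key iteration lemma: `T^k (S f − T f) ≡ S (T^k f) − (k+1) T^(k+1) f`. -/
lemma TA_pow (hg : DifferentiableOn ℂ g (ball (0:ℂ) 1)) {f : ℂ → ℂ} (hf : Good f) (k : ℕ) :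
    Set.EqOn ((Tg g)^[k] (fun z => Sg g f z - Tg g f z))
      (fun z => Sg g ((Tg g)^[k] f) z - ((k:ℂ)+1) * (Tg g)^[k+1] f z) (ball (0:ℂ) 1) := by
  induction k with
  | zero =>
    intro z hz
    simp only [Function.iterate_zero_apply, Function.iterate_one, one_mul, Nat.cast_zero, zero_add]
  | succ k ih =>
    intro z hz
    have gTk := good_iter_T hg hf k
    have gTk1 := good_iter_T hg hf (k+1)
    have gSTk := good_S hg gTk.1
    calc (Tg g)^[k+1] (fun z => Sg g f z - Tg g f z) z
        = Tg g ((Tg g)^[k] (fun z => Sg g f z - Tg g f z)) z := by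
          rw [Function.iterate_succ_apply']
      _ = Tg g (fun w => Sg g ((Tg g)^[k] f) w - ((k:ℂ)+1) * (Tg g)^[k+1] f w) z :=
          T_congr ih hz
      _ = Tg g (Sg g ((Tg g)^[k] f)) z - ((k:ℂ)+1) * Tg g ((Tg g)^[k+1] f) z :=
          T_sub_smul hg gSTk.1.continuousOn gTk1.1.continuousOn _ hz
      _ = (Sg g (Tg g ((Tg g)^[k] f)) z - Tg g (Tg g ((Tg g)^[k] f)) z)
            - ((k:ℂ)+1) * Tg g ((Tg g)^[k+1] f) z := by
          rw [comm_TS hg gTk hz]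
      _ = Sg g ((Tg g)^[k+1] f) z - (((k:ℕ)+1:ℂ)+1) * (Tg g)^[k+2] f z := by
          rw [← Function.iterate_succ_apply' (Tg g) k f,
            ← Function.iterate_succ_apply' (Tg g) (k+1) f]
          ring
      _ = Sg g ((Tg g)^[k+1] f) z - (((k+1:ℕ):ℂ)+1) * (Tg g)^[k+1+1] f z := by
          push_cast; ring_nf

lemma iter_S_comb (hg : DifferentiableOn ℂ g (ball (0:ℂ) 1)) {u v w : ℂ → ℂ}
    (hu : Good u) (hv : Good v) (c : ℂ)
    (hEq : Set.EqOn w (fun z => u z - c * v z) (ball (0:ℂ) 1)) (j : ℕ) :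
    Set.EqOn ((Sg g)^[j] w)
      (fun z => (Sg g)^[j] u z - c * (Sg g)^[j] v z) (ball (0:ℂ) 1) := by
  induction j with
  | zero => exact hEq
  | succ j ih =>
    intro z hz
    have gSu := good_iter_S hg hu j
    have gSv := good_iter_S hg hv j
    calc (Sg g)^[j+1] w z = Sg g ((Sg g)^[j] w) z := by rw [Function.iterate_succ_apply']
      _ = Sg g (fun z => (Sg g)^[j] u z - c * (Sg g)^[j] v z) z := S_congr ih hz
      _ = Sg g ((Sg g)^[j] u) z - c * Sg g ((Sg g)^[j] v) z :=
          S_sub_smul hg gSu.1 gSv.1 c hz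
      _ = (Sg g)^[j+1] u z - c * (Sg g)^[j+1] v z := by
          rw [← Function.iterate_succ_apply' (Sg g) j u, ← Function.iterate_succ_apply' (Sg g) j v]

/-- pure coefficient algebra step. -/
lemma sum_step (a : ℕ → ℕ → ℂ) (m : ℕ) :
    ∑ j ∈ Finset.range (m+1), ((-1:ℂ)^(m-j) * ((m.factorial:ℂ) / (j.factorial:ℂ))) *
      (a (j+1) (m-j) - (((m-j:ℕ):ℂ)+1) * a j (m-j+1))
    = ∑ k ∈ Finset.range (m+1+1), ((-1:ℂ)^(m+1-k) * (((m+1).factorial:ℂ) / (k.factorial:ℂ))) *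
        a k (m+1-k) := by
  have fac_ne : ∀ n : ℕ, ((n.factorial : ℂ)) ≠ 0 := fun n =>
    Nat.cast_ne_zero.mpr (Nat.factorial_ne_zero n)
  -- expand LHS
  have expand : ∀ j ∈ Finset.range (m+1),
      ((-1:ℂ)^(m-j) * ((m.factorial:ℂ) / (j.factorial:ℂ))) *
        (a (j+1) (m-j) - (((m-j:ℕ):ℂ)+1) * a j (m-j+1))
      = ((-1:ℂ)^(m-j) * ((m.factorial:ℂ) / (j.factorial:ℂ))) * a (j+1) (m-j)
        - ((-1:ℂ)^(m-j) * ((m.factorial:ℂ) / (j.factorial:ℂ)) * (((m-j:ℕ):ℂ)+1)) *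
            a j (m-j+1) := by
    intro j _; ring
  rw [Finset.sum_congr rfl expand, Finset.sum_sub_distrib]
  rw [Finset.sum_range_succ' (fun k => ((-1:ℂ)^(m+1-k) * (((m+1).factorial:ℂ) / (k.factorial:ℂ))) *
        a k (m+1-k)) (m+1)]
  rw [Finset.sum_range_succ' (fun j => ((-1:ℂ)^(m-j) * ((m.factorial:ℂ) / (j.factorial:ℂ))
        * (((m-j:ℕ):ℂ)+1)) * a j (m-j+1)) m]
  rw [Finset.sum_range_succ (fun j => ((-1:ℂ)^(m-j) * ((m.factorial:ℂ) / (j.factorial:ℂ))) *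
        a (j+1) (m-j)) m]
  rw [Finset.sum_range_succ (fun j => ((-1:ℂ)^(m+1-(j+1)) *
        (((m+1).factorial:ℂ) / ((j+1).factorial:ℂ))) * a (j+1) (m+1-(j+1))) m]
  have hmain : ∀ j ∈ Finset.range m,
      ((-1:ℂ)^(m-j) * ((m.factorial:ℂ) / (j.factorial:ℂ))) * a (j+1) (m-j)
      - ((-1:ℂ)^(m-(j+1)) * ((m.factorial:ℂ) / ((j+1).factorial:ℂ))
          * (((m-(j+1):ℕ):ℂ)+1)) * a (j+1) (m-(j+1)+1)
      = ((-1:ℂ)^(m+1-(j+1)) * (((m+1).factorial:ℂ) / ((j+1).factorial:ℂ))) *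
          a (j+1) (m+1-(j+1)) := by
    intro j hj
    have hjm : j < m := Finset.mem_range.mp hj
    obtain ⟨i, hi⟩ : ∃ i, m - (j+1) = i := ⟨m - (j+1), rfl⟩
    have h1 : m - j = i + 1 := by omega
    have h2 : m + 1 - (j+1) = i + 1 := by omega
    have h3 : m - (j+1) + 1 = i + 1 := by omega
    rw [hi, h1, h2]
    have hfm : (((m+1).factorial:ℂ)) = ((m:ℂ)+1) * (m.factorial:ℂ) := by
      push_cast [Nat.factorial_succ]; ring
    have hfj : (((j+1).factorial:ℂ)) = ((j:ℂ)+1) * (j.factorial:ℂ) := by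
      push_cast [Nat.factorial_succ]; ring
    have him : (m:ℂ) = (j:ℂ) + (i:ℂ) + 1 := by
      have : m = j + i + 1 := by omega
      rw [this]; push_cast; ring
    have h5 : ((j:ℂ)+1) ≠ 0 := Nat.cast_add_one_ne_zero j
    rw [hfm, hfj, him, pow_succ]
    field_simp [fac_ne j, h5]
    ring
  rw [← Finset.sum_congr rfl hmain] 
  rw [Finset.sum_sub_distrib]
  -- endpoints
  have e1 : ((-1:ℂ)^(m-m) * ((m.factorial:ℂ) / (m.factorial:ℂ))) * a (m+1) (m-m)
      = ((-1:ℂ)^(m+1-(m+1)) * (((m+1).factorial:ℂ) / ((m+1).factorial:ℂ))) *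
          a (m+1) (m+1-(m+1)) := by
    simp [Nat.sub_self, div_self (fac_ne m), div_self (fac_ne (m+1))]
  have e2 : ((-1:ℂ)^(m-0) * ((m.factorial:ℂ) / ((0:ℕ).factorial:ℂ)) * (((m-0:ℕ):ℂ)+1))
        * a 0 (m-0+1)
      = -(((-1:ℂ)^(m+1-0) * (((m+1).factorial:ℂ) / ((0:ℕ).factorial:ℂ))) * a 0 (m+1-0)) := by
    have hfm : (((m+1).factorial:ℂ)) = ((m:ℂ)+1) * (m.factorial:ℂ) := by
      push_cast [Nat.factorial_succ]; ring
    simp only [Nat.sub_zero, Nat.factorial_zero, Nat.cast_one, div_one, hfm]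
    rw [pow_succ]
    ring
  rw [e1, e2]
  ring

lemma good_A (hg : DifferentiableOn ℂ g (ball (0:ℂ) 1)) {f : ℂ → ℂ} (hf : Good f) :
    Good (Sg g f - Tg g f) :=
  ⟨(good_S hg hf.1).1.sub (good_T hg hf.1).1, by
    simp only [Pi.sub_apply, (good_S hg hf.1).2, (good_T hg hf.1).2, sub_zero]⟩

lemma main_iter (hg : DifferentiableOn ℂ g (ball (0:ℂ) 1)) (m : ℕ) :
    ∀ {f : ℂ → ℂ}, Good f →
    Set.EqOn ((fun h => Sg g h - Tg g h)^[m] f)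
      (fun z => ∑ j ∈ Finset.range (m + 1),
        ((-1:ℂ)^(m-j) * ((m.factorial:ℂ) / (j.factorial:ℂ))) *
          (Sg g)^[j] ((Tg g)^[m-j] f) z) (ball (0:ℂ) 1) := by
  induction m with
  | zero =>
    intro f hf z hz
    simp
  | succ m ih =>
    intro f hf z hz
    have hAf : Good ((fun h => Sg g h - Tg g h) f) := good_A hg hf
    have step : ∀ j ∈ Finset.range (m+1),
        ((-1:ℂ)^(m-j) * ((m.factorial:ℂ) / (j.factorial:ℂ))) *
          (Sg g)^[j] ((Tg g)^[m-j] ((fun h => Sg g h - Tg g h) f)) z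
        = ((-1:ℂ)^(m-j) * ((m.factorial:ℂ) / (j.factorial:ℂ))) *
            ((Sg g)^[j+1] ((Tg g)^[m-j] f) z
              - (((m-j:ℕ):ℂ)+1) * (Sg g)^[j] ((Tg g)^[m-j+1] f) z) := by
      intro j hj
      congr 1
      have e1 : Set.EqOn ((Tg g)^[m-j] ((fun h => Sg g h - Tg g h) f))
          (fun w => Sg g ((Tg g)^[m-j] f) w - (((m-j:ℕ):ℂ)+1) * (Tg g)^[m-j+1] f w)
          (ball (0:ℂ) 1) := TA_pow hg hf (m-j)
      have e2 := iter_S_comb hg (good_S hg (good_iter_T hg hf (m-j)).1)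
        (good_iter_T hg hf (m-j+1)) (((m-j:ℕ):ℂ)+1) e1 j hz
      rw [e2, ← Function.iterate_succ_apply (Sg g) j]
    calc (fun h => Sg g h - Tg g h)^[m+1] f z
        = (fun h => Sg g h - Tg g h)^[m] ((fun h => Sg g h - Tg g h) f) z := by
          rw [Function.iterate_succ_apply]
      _ = ∑ j ∈ Finset.range (m+1),
            ((-1:ℂ)^(m-j) * ((m.factorial:ℂ) / (j.factorial:ℂ))) *
              (Sg g)^[j] ((Tg g)^[m-j] ((fun h => Sg g h - Tg g h) f)) z := ih hAf hz
      _ = ∑ j ∈ Finset.range (m+1),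
            ((-1:ℂ)^(m-j) * ((m.factorial:ℂ) / (j.factorial:ℂ))) *
              ((Sg g)^[j+1] ((Tg g)^[m-j] f) z
                - (((m-j:ℕ):ℂ)+1) * (Sg g)^[j] ((Tg g)^[m-j+1] f) z) :=
          Finset.sum_congr rfl step
      _ = ∑ k ∈ Finset.range (m+1+1),
            ((-1:ℂ)^(m+1-k) * (((m+1).factorial:ℂ) / (k.factorial:ℂ))) *
              (Sg g)^[k] ((Tg g)^[m+1-k] f) z :=
          sum_step (fun p q => (Sg g)^[p] ((Tg g)^[q] f) z) m

end Aux

/-- For `f` holomorphic with `f 0 = 0`,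
`(S_g − T_g)^m f = ∑_{j=0}^m (−1)^{m−j} (m!/j!) S_g^j T_g^{m−j} f`. -/
theorem stmt_6 (g f : ℂ → ℂ) (hg : DifferentiableOn ℂ g (Metric.ball 0 1))
    (hf : DifferentiableOn ℂ f (Metric.ball 0 1)) (hf0 : f 0 = 0) (m : ℕ) (hm : 1 ≤ m) :
    ∀ z ∈ Metric.ball (0:ℂ) 1,
      (fun h => Sg g h - Tg g h)^[m] f z
        = ∑ j ∈ Finset.range (m + 1),
            (-1 : ℂ) ^ (m - j) * ((Nat.factorial m : ℂ) / (Nat.factorial j : ℂ))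
              * (Sg g)^[j] ((Tg g)^[m - j] f) z := by
  intro z hz
  exact main_iter hg m ⟨hf, hf0⟩ hz
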